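/- For every m ≥ 1, r > 0, and all n, k, j₁, j₂ ∈ ℕ with j₁ ≤ k and j₁ + j₂ > 0, there exists a constant C = C(n,k,j₁,j₂,r) > 0 such that for every smooth function f on B̄_r ⊂ ℝ^m that is flat at the origin, ⟨f⟩_{n,k,r} ≤ C · ⟨f⟩_{n,k−j₁,r}^{j₂/(j₁+j₂)} · ⟨f⟩_{n,k+j₂,r}^{j₁/(j₁+j₂)} (interpolation inequality in the weight index). -/

import Mathlib

open Metric Set

/-- The weighted norm `⟨f⟩_{n,k,r}` on flat functions on the closed ball. -/
noncomputable def flatNorm (m : ℕ) (r : ℝ) (n k : ℕ)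
    (f : EuclideanSpace ℝ (Fin m) → ℝ) : ℝ :=
  ⨆ p : (closedBall (0 : EuclideanSpace ℝ (Fin m)) r \ {0} :
      Set (EuclideanSpace ℝ (Fin m))) × Fin (n + 1),
    ‖(p.1 : EuclideanSpace ℝ (Fin m))‖ ^ (-(k : ℤ)) *
      ‖iteratedFDerivWithin ℝ p.2 f (closedBall 0 r) p.1‖

/-- Finiteness of all weighted norms: every iterated derivative of a flat function is
bounded by `C * ‖x‖ ^ K` for every `K`. -/
theorem flat_bound (m : ℕ) (r : ℝ) (hr : 0 < r)
    (f : EuclideanSpace ℝ (Fin m) → ℝ)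
    (hf : ContDiffOn ℝ (⊤ : ℕ∞) f (closedBall 0 r))
    (hflat : ∀ i : ℕ, iteratedFDerivWithin ℝ i f (closedBall 0 r) 0 = 0)
    (K : ℕ) : ∀ i : ℕ, ∃ C : ℝ, 0 ≤ C ∧ ∀ x ∈ closedBall (0 : EuclideanSpace ℝ (Fin m)) r,
      ‖iteratedFDerivWithin ℝ i f (closedBall 0 r) x‖ ≤ C * ‖x‖ ^ K := by
  have hU : UniqueDiffOn ℝ (closedBall (0 : EuclideanSpace ℝ (Fin m)) r) :=
    uniqueDiffOn_convex (convex_closedBall 0 r)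
      ⟨0, ball_subset_interior_closedBall (mem_ball_self hr)⟩
  induction K with
  | zero =>
    intro i
    obtain ⟨C, hC⟩ := (isCompact_closedBall (0 : EuclideanSpace ℝ (Fin m)) r).exists_bound_of_continuousOn
      (hf.continuousOn_iteratedFDerivWithin (by exact_mod_cast le_top) hU)
    refine ⟨max C 0, le_max_right _ _, fun x hx => ?_⟩
    rw [pow_zero, mul_one]
    exact (hC x hx).trans (le_max_left _ _)
  | succ K ih =>
    intro i
    obtain ⟨C, hC0, hC⟩ := ih (i + 1)
    refine ⟨C, hC0, fun x hx => ?_⟩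
    by_cases hx0 : x = 0
    · subst hx0
      rw [hflat i, norm_zero, norm_zero, zero_pow (Nat.succ_ne_zero K), mul_zero]
    · have hxpos : (0 : ℝ) < ‖x‖ := norm_pos_iff.2 hx0
      have hxr : ‖x‖ ≤ r := mem_closedBall_zero_iff.1 hx
      set s' := closedBall (0 : EuclideanSpace ℝ (Fin m)) ‖x‖ with hs'
      have hsub : s' ⊆ closedBall (0 : EuclideanSpace ℝ (Fin m)) r :=
        closedBall_subset_closedBall hxr
      have hU' : UniqueDiffOn ℝ s' :=
        uniqueDiffOn_convex (convex_closedBall 0 ‖x‖)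
          ⟨0, ball_subset_interior_closedBall (mem_ball_self hxpos)⟩
      have hdiff : DifferentiableOn ℝ
          (iteratedFDerivWithin ℝ i f (closedBall 0 r)) (closedBall 0 r) :=
        hf.differentiableOn_iteratedFDerivWithin (by exact_mod_cast WithTop.coe_lt_top i) hU
      have hbound : ∀ y ∈ s',
          ‖fderivWithin ℝ (iteratedFDerivWithin ℝ i f (closedBall 0 r)) s' y‖ ≤
            C * ‖x‖ ^ K := by
        intro y hy
        have hyB : y ∈ closedBall (0 : EuclideanSpace ℝ (Fin m)) r := hsub hy
        rw [fderivWithin_subset hsub (hU' y hy) (hdiff y hyB)]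
        calc ‖fderivWithin ℝ (iteratedFDerivWithin ℝ i f (closedBall 0 r))
              (closedBall 0 r) y‖
            = ‖iteratedFDerivWithin ℝ (i + 1) f (closedBall 0 r) y‖ :=
              norm_fderivWithin_iteratedFDerivWithin
          _ ≤ C * ‖y‖ ^ K := hC y hyB
          _ ≤ C * ‖x‖ ^ K := by
              gcongr
              exact mem_closedBall_zero_iff.1 hy
      have hmem0 : (0 : EuclideanSpace ℝ (Fin m)) ∈ s' := mem_closedBall_self hxpos.le
      have hmemx : x ∈ s' := mem_closedBall_zero_iff.2 le_rfl
      have := (convex_closedBall (0 : EuclideanSpace ℝ (Fin m)) ‖x‖).norm_image_sub_le_of_norm_fderivWithin_le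
        (hdiff.mono hsub) hbound hmem0 hmemx
      rw [hflat i, sub_zero, sub_zero] at this
      calc ‖iteratedFDerivWithin ℝ i f (closedBall 0 r) x‖
          ≤ C * ‖x‖ ^ K * ‖x‖ := this
        _ = C * ‖x‖ ^ (K + 1) := by ring

/-- interpolation inequality in the weight index: for `j₁ ≤ k`,
`j₁ + j₂ > 0`, there is `C > 0` with
`⟨f⟩_{n,k,r} ≤ C ⟨f⟩_{n,k−j₁,r}^{j₂/(j₁+j₂)} ⟨f⟩_{n,k+j₂,r}^{j₁/(j₁+j₂)}`
for every smooth `f` on `B̄_r` flat at the origin. -/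
theorem interpolation_weights (m : ℕ) (hm : 1 ≤ m) (r : ℝ) (hr : 0 < r)
    (n k j₁ j₂ : ℕ) (hj₁ : j₁ ≤ k) (hj : 0 < j₁ + j₂) :
    ∃ C > (0 : ℝ), ∀ f : EuclideanSpace ℝ (Fin m) → ℝ,
      ContDiffOn ℝ (⊤ : ℕ∞) f (closedBall 0 r) →
      (∀ i : ℕ, iteratedFDerivWithin ℝ i f (closedBall 0 r) 0 = 0) →
      flatNorm m r n k f ≤
        C * flatNorm m r n (k - j₁) f ^ ((j₂ : ℝ) / ((j₁ : ℝ) + (j₂ : ℝ))) *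
          flatNorm m r n (k + j₂) f ^ ((j₁ : ℝ) / ((j₁ : ℝ) + (j₂ : ℝ))) := by
  classical
  set E := EuclideanSpace ℝ (Fin m)
  set B := closedBall (0 : E) r with hB
  set θ : ℝ := (j₂ : ℝ) / ((j₁ : ℝ) + (j₂ : ℝ)) with hθdef
  set η : ℝ := (j₁ : ℝ) / ((j₁ : ℝ) + (j₂ : ℝ)) with hηdef
  have hjpos : (0 : ℝ) < (j₁ : ℝ) + (j₂ : ℝ) := by exact_mod_cast hj
  have hθ0 : 0 ≤ θ := by positivity
  have hη0 : 0 ≤ η := by positivity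
  have hθη : θ + η = 1 := by
    rw [hθdef, hηdef, ← add_div, add_comm]
    exact div_self hjpos.ne'
  -- a nonzero point of the closed ball
  have hne : Nonempty ((B \ {0} : Set E) × Fin (n + 1)) := by
    refine ⟨⟨⟨EuclideanSpace.single (⟨0, hm⟩ : Fin m) r, ?_⟩, 0⟩⟩
    have hnorm : ‖EuclideanSpace.single (⟨0, hm⟩ : Fin m) r‖ = r := by
      rw [EuclideanSpace.norm_single, Real.norm_eq_abs, abs_of_pos hr]
    constructor
    · rw [hB, mem_closedBall_zero_iff, hnorm]
    · simp only [mem_singleton_iff]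
      intro h
      rw [h, norm_zero] at hnorm
      exact hr.ne hnorm
  refine ⟨1, one_pos, fun f hf hflat => ?_⟩
  -- boundedness of all families
  have key := flat_bound m r hr f hf hflat
  have bdd : ∀ k' : ℕ, ∃ M : ℝ, ∀ p : (B \ {0} : Set E) × Fin (n + 1),
      ‖(p.1 : E)‖ ^ (-(k' : ℤ)) * ‖iteratedFDerivWithin ℝ p.2 f B p.1‖ ≤ M := by
    intro k'
    choose C hC0 hC using key k'
    refine ⟨∑ i ∈ Finset.range (n + 1), C i, fun p => ?_⟩
    obtain ⟨⟨x, hxB, hx0⟩, i⟩ := p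
    have hxpos : (0 : ℝ) < ‖x‖ := norm_pos_iff.2 hx0
    have h1 : ‖(x : E)‖ ^ (-(k' : ℤ)) * ‖iteratedFDerivWithin ℝ i f B x‖ ≤ C i := by
      have := hC i x hxB
      rw [zpow_neg, zpow_natCast]
      rw [inv_mul_le_iff₀ (by positivity)]
      calc ‖iteratedFDerivWithin ℝ (i : ℕ) f B x‖ ≤ C i * ‖x‖ ^ k' := this
        _ = ‖x‖ ^ k' * C i := by ring
    refine h1.trans (Finset.single_le_sum (fun j _ => hC0 j) ?_)
    exact Finset.mem_range.2 i.isLt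
  obtain ⟨M₁, hM₁⟩ := bdd (k - j₁)
  obtain ⟨M₂, hM₂⟩ := bdd (k + j₂)
  have bdd₁ : BddAbove (range fun p : (B \ {0} : Set E) × Fin (n + 1) =>
      ‖(p.1 : E)‖ ^ (-((k - j₁ : ℕ) : ℤ)) * ‖iteratedFDerivWithin ℝ p.2 f B p.1‖) :=
    ⟨M₁, forall_mem_range.2 hM₁⟩
  have bdd₂ : BddAbove (range fun p : (B \ {0} : Set E) × Fin (n + 1) =>
      ‖(p.1 : E)‖ ^ (-((k + j₂ : ℕ) : ℤ)) * ‖iteratedFDerivWithin ℝ p.2 f B p.1‖) :=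
    ⟨M₂, forall_mem_range.2 hM₂⟩
  rw [one_mul]
  haveI := hne
  simp only [flatNorm]
  refine ciSup_le fun p => ?_
  -- pointwise identity
  obtain ⟨⟨x, hxB, hx0⟩, i⟩ := p
  have hxpos : (0 : ℝ) < ‖x‖ := norm_pos_iff.2 hx0
  set d : ℝ := ‖iteratedFDerivWithin ℝ i f (closedBall 0 r) x‖ with hd
  have hd0 : 0 ≤ d := norm_nonneg _
  set t : ℝ := ‖x‖
  have hident : t ^ (-(k : ℤ)) * d =
      (t ^ (-((k - j₁ : ℕ) : ℤ)) * d) ^ θ * (t ^ (-((k + j₂ : ℕ) : ℤ)) * d) ^ η := by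
    have e1 : (t ^ (-((k - j₁ : ℕ) : ℤ)) * d) ^ θ
        = t ^ ((-((k - j₁ : ℕ) : ℤ) : ℝ) * θ) * d ^ θ := by
      rw [Real.mul_rpow (zpow_nonneg hxpos.le _) hd0, ← Real.rpow_intCast t,
        ← Real.rpow_mul hxpos.le]
      push_cast
      ring_nf
    have e2 : (t ^ (-((k + j₂ : ℕ) : ℤ)) * d) ^ η
        = t ^ ((-((k + j₂ : ℕ) : ℤ) : ℝ) * η) * d ^ η := by
      rw [Real.mul_rpow (zpow_nonneg hxpos.le _) hd0, ← Real.rpow_intCast t,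
        ← Real.rpow_mul hxpos.le]
      push_cast
      ring_nf
    rw [e1, e2, mul_mul_mul_comm, ← Real.rpow_add hxpos,
      ← Real.rpow_add' hd0 (by rw [hθη]; norm_num), hθη, Real.rpow_one]
    have hexp : (-((k - j₁ : ℕ) : ℤ) : ℝ) * θ + (-((k + j₂ : ℕ) : ℤ) : ℝ) * η
        = ((-(k : ℤ)) : ℝ) := by
      have h1 : ((k - j₁ : ℕ) : ℝ) = (k : ℝ) - (j₁ : ℝ) := by rw [Nat.cast_sub hj₁]
      push_cast [h1]
      rw [hθdef, hηdef]
      field_simp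
      ring
    rw [hexp]
    norm_cast
  rw [hident]
  have h1 := le_ciSup bdd₁ (⟨⟨x, hxB, hx0⟩, i⟩ : (closedBall (0:E) r \ {0} : Set E) × Fin (n + 1))
  have h2 := le_ciSup bdd₂ (⟨⟨x, hxB, hx0⟩, i⟩ : (closedBall (0:E) r \ {0} : Set E) × Fin (n + 1))
  have hb1 : (0:ℝ) ≤ t ^ (-((k - j₁ : ℕ) : ℤ)) * d := by positivity
  have hb2 : (0:ℝ) ≤ t ^ (-((k + j₂ : ℕ) : ℤ)) * d := by positivity
  exact mul_le_mul (Real.rpow_le_rpow hb1 h1 hθ0) (Real.rpow_le_rpow hb2 h2 hη0)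
    (Real.rpow_nonneg hb2 _) (Real.rpow_nonneg (hb1.trans h1) _)
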